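/- Let R be a reduced commutative ring of characteristic p, let n ≥ 1, and let w, w′ ∈ W(R). If F^{n−1}(w) − F^{n−1}(w′) lies in V^n(W(R)), then w_i = w′_i for every i ∈ {0,…,n−1}. (That is, the endomorphism induced by F^{n−1} on length-n truncated Witt vectors W_n(R) is injective.) -/
import Mathlib

open Function

lemma aux_versch_coeff (p : ℕ) [Fact p.Prime] {R : Type*} [CommRing R]
    (y : WittVector p R) : ∀ n, ∀ i < n,
    ((⇑(WittVector.verschiebung (p := p)))^[n] y).coeff i = 0 := by
  intro n
  induction n with
  | zero => intro i hi; omega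
  | succ n ih =>
    intro i hi
    rw [Function.iterate_succ_apply']
    cases i with
    | zero => exact WittVector.verschiebung_coeff_zero _
    | succ i =>
      rw [WittVector.verschiebung_coeff_succ]
      exact ih i (by omega)

lemma aux_frob_coeff (p : ℕ) [Fact p.Prime] {R : Type*} [CommRing R] [CharP R p]
    (w : WittVector p R) : ∀ k i,
    ((⇑(WittVector.frobenius (p := p)))^[k] w).coeff i = w.coeff i ^ p ^ k := by
  intro k
  induction k with
  | zero => intro i; simp
  | succ k ih =>
    intro i
    rw [Function.iterate_succ_apply', WittVector.coeff_frobenius_charP, ih, ← pow_mul,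
      pow_succ]

theorem stmt9 (p n : ℕ) [Fact p.Prime] (hn : 1 ≤ n)
    (R : Type*) [CommRing R] [IsReduced R] [CharP R p]
    (w w' : WittVector p R)
    (h : ∃ y : WittVector p R,
      (⇑(WittVector.frobenius (p := p)))^[n - 1] w
          - (⇑(WittVector.frobenius (p := p)))^[n - 1] w'
        = (⇑(WittVector.verschiebung (p := p)))^[n] y) :
    ∀ i < n, w.coeff i = w'.coeff i := by
  obtain ⟨y, hy⟩ := h
  intro i hi
  have key : ((⇑(WittVector.frobenius (p := p)))^[n - 1] w).coeff i
      = ((⇑(WittVector.frobenius (p := p)))^[n - 1] w').coeff i := by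
    have h1 : WittVector.truncate (p := p) n
        ((⇑(WittVector.frobenius (p := p)))^[n - 1] w)
        = WittVector.truncate (p := p) n
          ((⇑(WittVector.frobenius (p := p)))^[n - 1] w') := by
      have h2 : WittVector.truncate (p := p) n
          ((⇑(WittVector.verschiebung (p := p)))^[n] y) = 0 := by
        ext j
        rw [WittVector.coeff_truncate]
        simpa using aux_versch_coeff p y n j j.2
      have := congrArg (WittVector.truncate (p := p) (R := R) n) hy
      rw [map_sub, h2, sub_eq_zero] at this
      exact this
    have := congrArg (fun z => TruncatedWittVector.coeff ⟨i, hi⟩ z) h1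
    simpa [WittVector.coeff_truncate] using this
  rw [aux_frob_coeff, aux_frob_coeff] at key
  have hinj : Function.Injective fun x : R => x ^ p ^ (n - 1) := by
    have : Function.Injective (⇑(frobenius R p))^[n - 1] :=
      (frobenius_inj R p).iterate _
    intro a b hab
    apply this
    simpa only [iterate_frobenius] using hab
  exact hinj key
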